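/- Let $w \in S_n$ be a derangement, let $J = I_1(w)$ be its anti-exceedance set, and suppose $a \in J$, $b \notin J$. Then $(J \setminus \{a\}) \cup \{b\}$ belongs to the positroid $\mathcal{M}(w)$ (i.e., $I_r(w) \preceq_r (J \setminus \{a\}) \cup \{b\}$ in shifted Gale order for all $r \in [n]$) if and only if $a < b$ and for every $r \in [a+1, b]$: (1) there exists $x \in [a, r-1]$ with $w^{-1}(x) \geq r$, and (2) there exists $y \in [r, b]$ with $w^{-1}(y) \leq r-1$. -/

import Mathlib

/-- Gale order on subsets of `Fin n`: compare the `h`-th smallest elements. -/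
abbrev galeLE {n : ℕ} (I J : Finset (Fin n)) : Prop :=
  I.card = J.card ∧
    ∀ h < I.card, ((I.sort (· ≤ ·)).map Fin.val).getD h 0 ≤ ((J.sort (· ≤ ·)).map Fin.val).getD h 0

/-- The initial set `y[k] = {y(1),...,y(k)}` of a permutation. -/
def initSet {n : ℕ} (y : Equiv.Perm (Fin n)) (k : ℕ) : Finset (Fin n) :=
  (Finset.univ.filter fun j : Fin n => j.val < k).image y

/-- Bruhat order via the tableau criterion. -/
def bruhatLE {n : ℕ} (u v : Equiv.Perm (Fin n)) : Prop :=
  ∀ k : ℕ, galeLE (initSet u k) (initSet v k)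

/-- `v` is `k`-Grassmannian: increasing on the first `k` positions and on the rest. -/
def isGrassmannian {n : ℕ} (v : Equiv.Perm (Fin n)) (k : ℕ) : Prop :=
  (∀ i j : Fin n, i < j → j.val < k → v i < v j) ∧
    (∀ i j : Fin n, i < j → k ≤ i.val → v i < v j)

/-- The points `a,b,c,d` occur (weakly) in this clockwise cyclic order. -/
abbrev cyclic4 (a b c d : ℕ) : Prop :=
  ((if b < a then 1 else 0) + (if c < b then 1 else 0) +
      (if d < c then 1 else 0) + (if a < d then 1 else 0) : ℕ) ≤ 1

/-- Arcs `i ↦ w i` and `j ↦ w j` form an alignment (in this order):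
the points occur clockwise as `i, w i, w j, j`. -/
abbrev isAlignment {n : ℕ} (w : Equiv.Perm (Fin n)) (i j : Fin n) : Prop :=
  i ≠ j ∧ cyclic4 i.val (w i).val (w j).val j.val

/-- Arcs `i ↦ w i` and `j ↦ w j` form a misalignment (in this order):
the points occur clockwise as `i, w i, j, w j`. -/
abbrev isMisalignment {n : ℕ} (w : Equiv.Perm (Fin n)) (i j : Fin n) : Prop :=
  i ≠ j ∧ cyclic4 i.val (w i).val j.val (w j).val

/-- `x` lies strictly inside the clockwise open arc from `a` to `b`. -/
abbrev cIoo (a b x : ℕ) : Prop :=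
  (a < b ∧ a < x ∧ x < b) ∨ (b ≤ a ∧ (x < b ∨ a < x))

/-- Arcs `i ↦ w i` and `j ↦ w j` must cross: exactly one endpoint of the second
arc lies strictly inside the clockwise arc from `i` to `w i`. -/
abbrev isCrossing {n : ℕ} (w : Equiv.Perm (Fin n)) (i j : Fin n) : Prop :=
  i ≠ j ∧ Xor' (cIoo i.val (w i).val j.val) (cIoo i.val (w i).val (w j).val)

/-- The shifted anti-exceedance set `I_r(w) = {i : i <_r w⁻¹ i}` (0-indexed start `r`). -/
abbrev antiExc {n : ℕ} (w : Equiv.Perm (Fin n)) (r : Fin n) : Finset (Fin n) :=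
  Finset.univ.filter fun i => (i - r).val < (w.symm i - r).val

/-- The shifted Gale order `⪯_r`, obtained by rotating so that `r` is smallest. -/
abbrev shiftedGaleLE {n : ℕ} (r : Fin n) (I J : Finset (Fin n)) : Prop :=
  galeLE (I.image fun x => x - r) (J.image fun x => x - r)

/-- The collection `{y[k] : y ∈ [u,v]}`. -/
def intervalBases {n : ℕ} (u v : Equiv.Perm (Fin n)) (k : ℕ) : Set (Finset (Fin n)) :=
  {I | ∃ y : Equiv.Perm (Fin n), bruhatLE u y ∧ bruhatLE y v ∧ initSet y k = I}

section AEPCAuxSection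
open Finset
set_option linter.unusedSectionVars false

namespace AEPCAux

lemma subVal {n : ℕ} [NeZero n] (x r : Fin n) :
    (x - r).val = if r.val ≤ x.val then x.val - r.val else x.val + n - r.val := by
  have hx := x.isLt; have hr := r.isLt
  have h : (x - r).val = (n - r.val + x.val) % n := by simp [Fin.sub_def]
  rcases Nat.lt_or_ge x.val r.val with hc | hc
  · rw [h, Nat.mod_eq_of_lt (by omega), if_neg (by omega)]; omega
  · have e : n - r.val + x.val = (x.val - r.val) + n := by omega
    rw [h, e, Nat.add_mod_right, Nat.mod_eq_of_lt (by omega), if_pos (by omega)]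

variable {n : ℕ} [NeZero n] (w : Equiv.Perm (Fin n))

def Pset (r : Fin n) (t : ℕ) : Finset (Fin n) :=
  univ.filter fun x => r.val ≤ x.val ∧ x.val - r.val ≤ t ∧ (w.symm x).val < r.val

def Qset (r : Fin n) (t : ℕ) : Finset (Fin n) :=
  univ.filter fun x => x.val < r.val ∧ x.val + n - r.val ≤ t ∧ r.val ≤ (w.symm x).val

def Lset (r : Fin n) : Finset (Fin n) :=
  univ.filter fun x => x.val < r.val ∧ r.val ≤ (w.symm x).val

def Rset (r : Fin n) : Finset (Fin n) :=
  univ.filter fun x => r.val ≤ x.val ∧ (w.symm x).val < r.val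

lemma filter_symm_card (p : Fin n → Prop) [DecidablePred p] :
    (univ.filter fun x => p (w.symm x)).card = (univ.filter p).card := by
  rw [← Finset.card_image_of_injective (univ.filter p) w.injective]
  congr 1
  ext x
  simp only [Finset.mem_image, Finset.mem_filter, Finset.mem_univ, true_and]
  constructor
  · intro hp; exact ⟨w.symm x, hp, by simp⟩
  · rintro ⟨y, hy, rfl⟩; simpa using hy

lemma card_val_lt (r : Fin n) :
    (univ.filter fun x : Fin n => x.val < r.val).card = r.val := by
  have hb : (univ.filter fun x : Fin n => x.val < r.val).card = (Finset.range r.val).card := by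
    apply Finset.card_bij (fun (x : Fin n) _ => x.val)
    · intro x hx; simp only [mem_filter] at hx; simpa using hx.2
    · intro x hx y hy hxy; exact Fin.val_injective hxy
    · intro v hv
      have hv' : v < r.val := by simpa using hv
      refine ⟨⟨v, by omega⟩, ?_, rfl⟩
      simp only [mem_filter, mem_univ, true_and]
      exact hv'
  rw [hb, Finset.card_range]

lemma cardLR (r : Fin n) : (Lset w r).card = (Rset w r).card := by
  have h1 : (Lset w r).card + (univ.filter fun x : Fin n => x.val < r.val ∧ (w.symm x).val < r.val).card
      = (univ.filter fun x : Fin n => x.val < r.val).card := by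
    rw [Lset]
    simp only [Finset.card_filter]
    rw [← Finset.sum_add_distrib]
    exact Finset.sum_congr rfl fun x _ => by split_ifs <;> omega
  have h2 : (Rset w r).card + (univ.filter fun x : Fin n => x.val < r.val ∧ (w.symm x).val < r.val).card
      = (univ.filter fun x : Fin n => (w.symm x).val < r.val).card := by
    rw [Rset]
    simp only [Finset.card_filter]
    rw [← Finset.sum_add_distrib]
    exact Finset.sum_congr rfl fun x _ => by split_ifs <;> omega
  have h3 := filter_symm_card w (fun x : Fin n => x.val < r.val)
  have h4 := card_val_lt (n := n) r
  omega

lemma filt_univ (S : Finset (Fin n)) (q : Fin n → Prop) [DecidablePred q] :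
    (S.filter q).card = (univ.filter fun x => x ∈ S ∧ q x).card := by
  congr 1
  ext x
  simp [Finset.mem_filter]

lemma master (hw : ∀ i, w i ≠ i) (r : Fin n) (t : ℕ) :
    ((antiExc w r).filter fun x => (x - r).val ≤ t).card + (Qset w r t).card
      = ((antiExc w 0).filter fun x => (x - r).val ≤ t).card + (Pset w r t).card := by
  have hW : ∀ x : Fin n, (w.symm x).val ≠ x.val := by
    intro x h
    have h2 : w.symm x = x := Fin.val_injective h
    have := hw x
    rw [← h2, Equiv.apply_symm_apply] at this
    exact this h2.symm
  rw [filt_univ (antiExc w r), filt_univ (antiExc w 0), Pset, Qset]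
  simp only [Finset.card_filter]
  rw [← Finset.sum_add_distrib, ← Finset.sum_add_distrib]
  refine Finset.sum_congr rfl fun x _ => ?_
  have hx := x.isLt
  have hy := (w.symm x).isLt
  have hr := r.isLt
  have hne := hW x
  simp only [antiExc, Finset.mem_filter, Finset.mem_univ, true_and, subVal, sub_zero,
    Fin.val_zero, Nat.le_zero]
  split_ifs <;> omega

lemma chi_card (a : Fin n) (q : Fin n → Prop) [DecidablePred q] :
    (univ.filter fun x => x = a ∧ q x).card = if q a then 1 else 0 := by
  by_cases h : q a
  · rw [if_pos h, Finset.card_eq_one]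
    refine ⟨a, ?_⟩
    ext x
    simp only [mem_filter, mem_univ, true_and, mem_singleton]
    constructor
    · rintro ⟨rfl, -⟩; rfl
    · rintro rfl; exact ⟨rfl, h⟩
  · rw [if_neg h, Finset.card_eq_zero, Finset.filter_eq_empty_iff]
    rintro x - ⟨rfl, hq⟩
    exact h hq

lemma K_identity {a b : Fin n} (ha : a ∈ antiExc w 0) (hb : b ∉ antiExc w 0)
    (r : Fin n) (t : ℕ) :
    ((insert b ((antiExc w 0).erase a)).filter fun x => (x - r).val ≤ t).card
        + (if (a - r).val ≤ t then 1 else 0)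
      = ((antiExc w 0).filter fun x => (x - r).val ≤ t).card
        + (if (b - r).val ≤ t then 1 else 0) := by
  have hab : a ≠ b := fun h => hb (h ▸ ha)
  rw [filt_univ (insert b ((antiExc w 0).erase a)) (fun x => (x - r).val ≤ t),
    filt_univ (antiExc w 0) (fun x => (x - r).val ≤ t),
    ← chi_card a (fun x => (x - r).val ≤ t),
    ← chi_card b (fun x => (x - r).val ≤ t)]
  simp only [Finset.card_filter]
  rw [← Finset.sum_add_distrib, ← Finset.sum_add_distrib]
  refine Finset.sum_congr rfl fun x _ => ?_
  by_cases hxa : x = a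
  · subst hxa
    have hK : x ∉ insert b ((antiExc w 0).erase x) := by
      simp [Finset.mem_insert, Finset.mem_erase, hab]
    simp only [Finset.mem_univ, true_and, hK, false_and, and_false, if_false,
      eq_self_iff_true, if_neg (fun h : (x:Fin n) = b => hab h)]
    rw [if_neg (fun h : x = b ∧ (x - r).val ≤ t => hab h.1)]
    simp [ha]
  · by_cases hxb : x = b
    · subst hxb
      have hK : x ∈ insert x ((antiExc w 0).erase a) := Finset.mem_insert_self _ _
      simp [hK, hb, fun h : x = a => hxa h]
    · have hK : (x ∈ insert b ((antiExc w 0).erase a)) ↔ x ∈ antiExc w 0 := by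
        simp [Finset.mem_insert, Finset.mem_erase, hxa, hxb]
      by_cases hx : x ∈ antiExc w 0 <;> simp [hK, hx, hxa, hxb]

lemma Qset_empty {r : Fin n} {t : ℕ} (h : r.val + t < n) : Qset w r t = ∅ := by
  rw [Qset, Finset.filter_eq_empty_iff]
  intro x _
  have := x.isLt
  omega

lemma QleP (r : Fin n) (t : ℕ) : (Qset w r t).card ≤ (Pset w r t).card := by
  rcases Nat.lt_or_ge (r.val + t) n with h | h
  · simp [Qset_empty w h]
  · have h1 : Qset w r t ⊆ Lset w r := by
      intro x hx
      simp only [Qset, Lset, mem_filter, mem_univ, true_and] at hx ⊢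
      exact ⟨hx.1, hx.2.2⟩
    have h2 : Rset w r = Pset w r t := by
      rw [Rset, Pset]
      refine Finset.filter_congr fun x _ => ?_
      have := x.isLt
      constructor
      · rintro ⟨ha', hb'⟩; exact ⟨ha', by omega, hb'⟩
      · rintro ⟨ha', _, hb'⟩; exact ⟨ha', hb'⟩
    calc (Qset w r t).card ≤ (Lset w r).card := Finset.card_le_card h1
      _ = (Rset w r).card := cardLR w r
      _ = (Pset w r t).card := by rw [h2]

lemma card_antiExc (hw : ∀ i, w i ≠ i) (r : Fin n) :
    (antiExc w r).card = (antiExc w 0).card := by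
  have hm := master w hw r (n - 1)
  have hfull : ∀ S : Finset (Fin n), (S.filter fun x => (x - r).val ≤ n - 1) = S :=
    fun S => Finset.filter_true_of_mem fun x _ => by have := (x - r).isLt; omega
  have hQ : Qset w r (n-1) = Lset w r := by
    rw [Qset, Lset]
    refine Finset.filter_congr fun x _ => ?_
    have := x.isLt; have := r.isLt
    constructor
    · rintro ⟨h1, h2, h3⟩; exact ⟨h1, h3⟩
    · rintro ⟨h1, h3⟩; exact ⟨h1, by omega, h3⟩
  have hP : Pset w r (n-1) = Rset w r := by
    rw [Pset, Rset]
    refine Finset.filter_congr fun x _ => ?_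
    have := x.isLt
    constructor
    · rintro ⟨h1, h2, h3⟩; exact ⟨h1, h3⟩
    · rintro ⟨h1, h3⟩; exact ⟨h1, by omega, h3⟩
  rw [hfull, hfull, hQ, hP] at hm
  have := cardLR w r
  omega


lemma sorted_getD (l : List ℕ) (hl : l.Pairwise (· ≤ ·)) (t : ℕ) :
    ∀ h : ℕ, h < l.length → (l.getD h 0 ≤ t ↔ h < (l.filter (fun v => v ≤ t)).length) := by
  induction l with
  | nil => intro h hh; simp at hh
  | cons x xs ih =>
    rw [List.pairwise_cons] at hl
    intro h hh
    by_cases hx : x ≤ t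
    · cases h with
      | zero => simpa [List.filter_cons, hx] using hx
      | succ m =>
        simp only [List.getD_cons_succ, List.filter_cons, if_pos hx]
        rw [ih hl.2 m (by simpa using hh)]
        simp [hx]
    · have hall : xs.filter (fun v => v ≤ t) = [] := by
        rw [List.filter_eq_nil_iff]
        intro v hv
        simp only [decide_eq_true_eq]
        have := hl.1 v hv; omega
      have hfe : (x :: xs).filter (fun v => v ≤ t) = [] := by
        rw [List.filter_cons, if_neg (by simpa using hx)]; exact hall
      rw [hfe]
      simp only [List.length_nil]
      constructor
      · intro hle
        exfalso
        cases h with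
        | zero => simp at hle; omega
        | succ m =>
          simp only [List.getD_cons_succ] at hle
          have hm : m < xs.length := by simpa using hh
          rw [List.getD_eq_getElem _ _ hm] at hle
          have : x ≤ xs[m] := hl.1 _ (List.getElem_mem hm)
          omega
      · omega

lemma nth_le_iff {n : ℕ} (s : Finset (Fin n)) {h : ℕ} (hh : h < s.card) (t : ℕ) :
    ((s.sort (· ≤ ·)).map Fin.val).getD h 0 ≤ t ↔ h < (s.filter (fun x => x.val ≤ t)).card := by
  have hsorted : ((s.sort (· ≤ ·)).map Fin.val).Pairwise (· ≤ ·) :=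
    List.Pairwise.map Fin.val (fun a b (hab : a ≤ b) => Fin.le_def.mp hab) (Finset.pairwise_sort _ _)
  have hlen : ((s.sort (· ≤ ·)).map Fin.val).length = s.card := by
    rw [List.length_map, Finset.length_sort]
  have hfl : (((s.sort (· ≤ ·)).map Fin.val).filter (fun v => v ≤ t)).length
      = (s.filter (fun x => x.val ≤ t)).card := by
    rw [List.filter_map, List.length_map]
    have e2 : ((s.sort (· ≤ ·)).filter ((fun v => decide (v ≤ t)) ∘ Fin.val)).length
        = Multiset.card (Multiset.filter (fun x : Fin n => x.val ≤ t) (↑(s.sort (· ≤ ·)) : Multiset (Fin n))) := by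
      rw [Multiset.filter_coe, Multiset.coe_card]
      rfl
    rw [e2, Finset.sort_eq]
    rfl
  rw [← hfl]
  exact sorted_getD _ hsorted t h (by omega)


lemma gale_iff {n : ℕ} (I J : Finset (Fin n)) :
    galeLE I J ↔ I.card = J.card ∧
      ∀ t : ℕ, (J.filter fun x => x.val ≤ t).card ≤ (I.filter fun x => x.val ≤ t).card := by
  constructor
  · rintro ⟨hc, hg⟩
    refine ⟨hc, fun t => ?_⟩
    set m := (J.filter fun x => x.val ≤ t).card with hm
    rcases Nat.eq_zero_or_pos m with h0 | h0
    · omega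
    have hmJ : m ≤ J.card := card_le_card (filter_subset _ _)
    have hJ : ((J.sort (· ≤ ·)).map Fin.val).getD (m-1) 0 ≤ t :=
      (nth_le_iff J (h := m - 1) (by omega) t).mpr (by omega)
    have hI1 : ((I.sort (· ≤ ·)).map Fin.val).getD (m-1) 0 ≤ t :=
      le_trans (hg (m-1) (by omega)) hJ
    have := (nth_le_iff I (h := m - 1) (by omega) t).mp hI1
    omega
  · rintro ⟨hc, hcnt⟩
    refine ⟨hc, fun h hh => ?_⟩
    set t := ((J.sort (· ≤ ·)).map Fin.val).getD h 0 with ht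
    have h1 : h < (J.filter fun x => x.val ≤ t).card :=
      (nth_le_iff J (hc ▸ hh) t).mp (le_refl t)
    exact (nth_le_iff I hh t).mpr (lt_of_lt_of_le h1 (hcnt t))

lemma shifted_iff {n : ℕ} [NeZero n] (r : Fin n) (I J : Finset (Fin n)) :
    shiftedGaleLE r I J ↔ I.card = J.card ∧
      ∀ t : ℕ, (J.filter fun x => (x - r).val ≤ t).card ≤ (I.filter fun x => (x - r).val ≤ t).card := by
  have hinj : Function.Injective (fun x : Fin n => x - r) := sub_left_injective
  have himg : ∀ (S : Finset (Fin n)) (t : ℕ),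
      ((S.image fun x => x - r).filter fun x => x.val ≤ t).card
        = (S.filter fun x => (x - r).val ≤ t).card := by
    intro S t
    rw [Finset.filter_image, Finset.card_image_of_injective _ hinj]
  rw [shiftedGaleLE, gale_iff, Finset.card_image_of_injective _ hinj,
    Finset.card_image_of_injective _ hinj]
  simp only [himg]


end AEPCAux
end AEPCAuxSection

/-- Anti-exchange pair condition: for a derangement `w` with anti-exceedance set
`J = I_1(w)`, `a ∈ J`, `b ∉ J`, the set `(J \ {a}) ∪ {b}` lies in the positroid `M(w)`
iff `a < b` and for every `r ∈ [a+1,b]` there are `x ∈ [a,r-1]` with `w⁻¹(x) ≥ r` and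
`y ∈ [r,b]` with `w⁻¹(y) ≤ r-1`. -/
theorem anti_exchange_pair_condition (n : ℕ) [NeZero n] (w : Equiv.Perm (Fin n))
    (hw : ∀ i, w i ≠ i) (a b : Fin n)
    (ha : a ∈ antiExc w 0) (hb : b ∉ antiExc w 0) :
    (∀ r : Fin n, shiftedGaleLE r (antiExc w r) (insert b ((antiExc w 0).erase a))) ↔
      (a < b ∧ ∀ r : Fin n, a < r → r ≤ b →
        (∃ x : Fin n, a ≤ x ∧ x < r ∧ r ≤ w.symm x) ∧
        (∃ y : Fin n, r ≤ y ∧ y ≤ b ∧ w.symm y < r)) := by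
  classical
  have hab : a ≠ b := fun h => hb (h ▸ ha)
  have habv : a.val ≠ b.val := fun h => hab (Fin.val_injective h)
  have hav := a.isLt; have hbv := b.isLt
  have cardK : (insert b ((antiExc w 0).erase a)).card = (antiExc w 0).card := by
    have hbe : b ∉ (antiExc w 0).erase a := fun h => hb (Finset.mem_of_mem_erase h)
    rw [Finset.card_insert_of_notMem hbe, Finset.card_erase_of_mem ha]
    have : 0 < (antiExc w 0).card := Finset.card_pos.mpr ⟨a, ha⟩
    omega
  have hstar_eq : ∀ (r : Fin n) (t : ℕ),
      (((insert b ((antiExc w 0).erase a)).filter fun x => (x - r).val ≤ t).card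
          ≤ ((antiExc w r).filter fun x => (x - r).val ≤ t).card)
      ↔ ((if (b - r).val ≤ t then 1 else 0) + (AEPCAux.Qset w r t).card
          ≤ (if (a - r).val ≤ t then 1 else 0) + (AEPCAux.Pset w r t).card) := by
    intro r t
    have h1 := AEPCAux.master w hw r t
    have h2 := AEPCAux.K_identity w ha hb r t
    constructor <;> intro h <;> omega
  have hL_iff : (∀ r : Fin n, shiftedGaleLE r (antiExc w r) (insert b ((antiExc w 0).erase a))) ↔
      ∀ (r : Fin n) (t : ℕ), (if (b - r).val ≤ t then 1 else 0) + (AEPCAux.Qset w r t).card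
          ≤ (if (a - r).val ≤ t then 1 else 0) + (AEPCAux.Pset w r t).card := by
    constructor
    · intro hL r t
      exact (hstar_eq r t).mp (((AEPCAux.shifted_iff r _ _).mp (hL r)).2 t)
    · intro hs r
      rw [AEPCAux.shifted_iff]
      exact ⟨by rw [AEPCAux.card_antiExc w hw r, cardK], fun t => (hstar_eq r t).mpr (hs r t)⟩
  rw [hL_iff]
  constructor
  · intro hs
    have hab2 : a < b := by
      have h0 := hs 0 b.val
      have hQ0 : AEPCAux.Qset w 0 b.val = ∅ := by
        rw [AEPCAux.Qset, Finset.filter_eq_empty_iff]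
        intro x _
        simp only [Fin.val_zero]
        omega
      have hP0 : AEPCAux.Pset w 0 b.val = ∅ := by
        rw [AEPCAux.Pset, Finset.filter_eq_empty_iff]
        intro x _
        simp only [Fin.val_zero]
        omega
      rw [hQ0, hP0, sub_zero, sub_zero, if_pos (le_refl b.val)] at h0
      simp only [Finset.card_empty] at h0
      rw [Fin.lt_def]
      by_contra hcon
      rw [if_neg (by omega)] at h0
      omega
    refine ⟨hab2, ?_⟩
    intro r har hrb
    have harv : a.val < r.val := Fin.lt_def.mp har
    have hrbv : r.val ≤ b.val := Fin.le_def.mp hrb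
    have hr := r.isLt
    constructor
    · -- cond1
      set t := a.val + n - 1 - r.val with ht
      have h1 := hs r t
      rw [if_pos (show (b - r).val ≤ t by rw [AEPCAux.subVal, if_pos hrbv]; omega)] at h1
      rw [if_neg (show ¬ (a - r).val ≤ t by rw [AEPCAux.subVal, if_neg (by omega)]; omega)] at h1
      have hP : AEPCAux.Pset w r t = AEPCAux.Rset w r := by
        rw [AEPCAux.Pset, AEPCAux.Rset]
        refine Finset.filter_congr fun x _ => ?_
        have := x.isLt
        constructor
        · rintro ⟨h1', h2', h3'⟩; exact ⟨h1', h3'⟩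
        · rintro ⟨h1', h3'⟩; exact ⟨h1', by omega, h3'⟩
      have hQsub : AEPCAux.Qset w r t ⊆ AEPCAux.Lset w r := by
        intro x hx
        simp only [AEPCAux.Qset, AEPCAux.Lset, Finset.mem_filter, Finset.mem_univ,
          true_and] at hx ⊢
        exact ⟨hx.1, hx.2.2⟩
      have hLR := AEPCAux.cardLR w r
      rw [hP] at h1
      have hcard : (AEPCAux.Qset w r t).card < (AEPCAux.Lset w r).card := by omega
      have hne : AEPCAux.Qset w r t ≠ AEPCAux.Lset w r := by
        intro h; rw [h] at hcard; omega
      obtain ⟨x, hxL, hxQ⟩ := Finset.exists_of_ssubset (lt_of_le_of_ne hQsub hne)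
      simp only [AEPCAux.Lset, Finset.mem_filter, Finset.mem_univ, true_and] at hxL
      simp only [AEPCAux.Qset, Finset.mem_filter, Finset.mem_univ, true_and, not_and] at hxQ
      have hxa : a.val ≤ x.val := by
        by_contra hcon
        exact hxQ hxL.1 (by omega) hxL.2
      exact ⟨x, Fin.le_def.mpr hxa, Fin.lt_def.mpr hxL.1, Fin.le_def.mpr hxL.2⟩
    · -- cond2
      have h1 := hs r (b.val - r.val)
      rw [if_pos (show (b - r).val ≤ b.val - r.val by rw [AEPCAux.subVal, if_pos hrbv])] at h1
      rw [if_neg (show ¬ (a - r).val ≤ b.val - r.val by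
        rw [AEPCAux.subVal, if_neg (by omega)]; omega)] at h1
      obtain ⟨y, hy⟩ := Finset.card_pos.mp (show 0 < (AEPCAux.Pset w r (b.val - r.val)).card by omega)
      simp only [AEPCAux.Pset, Finset.mem_filter, Finset.mem_univ, true_and] at hy
      exact ⟨y, Fin.le_def.mpr hy.1, Fin.le_def.mpr (by omega), Fin.lt_def.mpr hy.2.2⟩
  · rintro ⟨hab2, hcond⟩ r t
    have habv2 : a.val < b.val := Fin.lt_def.mp hab2
    have hr := r.isLt
    have hQP := AEPCAux.QleP w r t
    by_cases hca : (a - r).val ≤ t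
    · rw [if_pos hca]
      split_ifs <;> omega
    by_cases hcb : (b - r).val ≤ t
    swap
    · rw [if_neg hcb, if_neg hca]; omega
    rw [if_pos hcb, if_neg hca]
    rw [AEPCAux.subVal] at hca hcb
    rcases le_or_gt r.val a.val with hra | hra
    · rw [if_pos hra] at hca
      rw [if_pos (by omega : r.val ≤ b.val)] at hcb
      omega
    rcases Nat.lt_or_ge b.val r.val with hbr | hbr
    · rw [if_neg (by omega)] at hca
      rw [if_neg (by omega)] at hcb
      omega
    rw [if_neg (by omega)] at hca
    rw [if_pos hbr] at hcb
    obtain ⟨⟨x, hx1, hx2, hx3⟩, ⟨y, hy1, hy2, hy3⟩⟩ :=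
      hcond r (Fin.lt_def.mpr hra) (Fin.le_def.mpr hbr)
    rw [Fin.le_def] at hx1 hx3 hy1 hy2
    rw [Fin.lt_def] at hx2 hy3
    rcases Nat.lt_or_ge (r.val + t) n with hrt | hrt
    · rw [AEPCAux.Qset_empty w hrt]
      have hyP : y ∈ AEPCAux.Pset w r t := by
        simp only [AEPCAux.Pset, Finset.mem_filter, Finset.mem_univ, true_and]
        exact ⟨hy1, by omega, hy3⟩
      have hcp := Finset.card_pos.mpr ⟨y, hyP⟩
      simp only [Finset.card_empty]
      omega
    · have hPR : AEPCAux.Pset w r t = AEPCAux.Rset w r := by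
        rw [AEPCAux.Pset, AEPCAux.Rset]
        refine Finset.filter_congr fun z _ => ?_
        have := z.isLt
        constructor
        · rintro ⟨h1', h2', h3'⟩; exact ⟨h1', h3'⟩
        · rintro ⟨h1', h3'⟩; exact ⟨h1', by omega, h3'⟩
      have hQsub : AEPCAux.Qset w r t ⊆ AEPCAux.Lset w r := by
        intro z hz
        simp only [AEPCAux.Qset, AEPCAux.Lset, Finset.mem_filter, Finset.mem_univ,
          true_and] at hz ⊢
        exact ⟨hz.1, hz.2.2⟩
      have hxL : x ∈ AEPCAux.Lset w r := by
        simp only [AEPCAux.Lset, Finset.mem_filter, Finset.mem_univ, true_and]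
        exact ⟨hx2, hx3⟩
      have hxQ : x ∉ AEPCAux.Qset w r t := by
        simp only [AEPCAux.Qset, Finset.mem_filter, Finset.mem_univ, true_and, not_and]
        intro _ h2'
        omega
      have hne : AEPCAux.Qset w r t ≠ AEPCAux.Lset w r := by
        intro h; rw [h] at hxQ; exact hxQ hxL
      have hcard := Finset.card_lt_card (lt_of_le_of_ne hQsub hne)
      have hLR := AEPCAux.cardLR w r
      rw [hPR]
      omega
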